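/- Let A be a finitely generated abelian group and let α and β be endomorphisms of A such that β - α = m·id_A for some integer m. Then for every prime p not dividing m, the Sylow p-subgroup of coker(α∘β) is isomorphic to the Sylow p-subgroup of coker(α) ⊕ coker(β). -/

import Mathlib

private lemma memP_aux {G : Type*} [AddCommGroup G] (p : ℕ) [Fact p.Prime] (g : G) :
    g ∈ AddCommGroup.primaryComponent G p ↔ ∃ k : ℕ, p ^ k • g = 0 :=
  Iff.rfl

private lemma nsmul_zsmul_aux {G : Type*} [AddCommGroup G] (p k : ℕ) (a : G) :
    p ^ k • a = ((p : ℤ) ^ k) • a := by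
  rw [← natCast_zsmul]; push_cast; ring_nf

theorem stmt0 (A : Type*) [AddCommGroup A] [AddGroup.FG A]
    (α β : A →+ A) (m : ℤ) (hβα : β - α = m • AddMonoidHom.id A)
    [Finite (A ⧸ (α.comp β).range)] [Finite (A ⧸ α.range)] [Finite (A ⧸ β.range)]
    (p : ℕ) [Fact p.Prime] (hpm : ¬ (p : ℤ) ∣ m) :
    Nonempty
      ((AddCommGroup.primaryComponent (A ⧸ (α.comp β).range) p) ≃+
        (AddCommGroup.primaryComponent ((A ⧸ α.range) × (A ⧸ β.range)) p)) := by
  classical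
  set N₀ := (α.comp β).range with hN₀
  set N₁ := α.range with hN₁
  set N₂ := β.range with hN₂
  have hβfun : ∀ x, β x = α x + m • x := by
    intro x
    have h := congrFun (congrArg DFunLike.coe hβα) x
    simp only [AddMonoidHom.sub_apply, AddMonoidHom.smul_apply, AddMonoidHom.id_apply] at h
    exact sub_eq_iff_eq_add'.mp h
  have hcomm : ∀ a, α (β a) = β (α a) := by
    intro a
    rw [hβfun a, hβfun (α a), map_add, map_zsmul]
  have h01 : N₀ ≤ N₁ := by rintro x ⟨a, rfl⟩; exact ⟨β a, rfl⟩
  have h02 : N₀ ≤ N₂ := by rintro x ⟨a, rfl⟩; exact ⟨α a, (hcomm a).symm⟩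
  have key1 : ∀ z, z ∈ N₁ → z ∈ N₂ → m • z ∈ N₀ := by
    rintro z ⟨a, ha⟩ ⟨b, hb⟩
    refine ⟨a - b, ?_⟩
    have e1 : α (β a) = β z := by rw [hcomm, ha]
    have e2 : α (β b) = α z := by rw [hb]
    show α (β (a - b)) = m • z
    calc α (β (a - b)) = α (β a) - α (β b) := by rw [map_sub, map_sub]
      _ = β z - α z := by rw [e1, e2]
      _ = m • z := sub_eq_iff_eq_add'.mpr (hβfun z)
  have hp' : Prime ((p : ℤ)) := Nat.prime_iff_prime_int.mp Fact.out
  have hcop : ∀ k : ℕ, IsCoprime ((p : ℤ) ^ k) m :=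
    fun k => ((hp'.coprime_iff_not_dvd.mpr hpm).pow_left)
  have hker : ∀ x ∈ N₀,
      ((QuotientAddGroup.mk' N₁).prod (QuotientAddGroup.mk' N₂)) x = 0 := by
    intro x hx
    have h1 := h01 hx
    have h2 := h02 hx
    simp_all [Prod.ext_iff, QuotientAddGroup.eq_zero_iff]
  set φ : (A ⧸ N₀) →+ (A ⧸ N₁) × (A ⧸ N₂) :=
    QuotientAddGroup.lift N₀ ((QuotientAddGroup.mk' N₁).prod (QuotientAddGroup.mk' N₂)) hker
    with hφ
  have hφmk : ∀ x : A, φ (QuotientAddGroup.mk x)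
      = (QuotientAddGroup.mk x, QuotientAddGroup.mk x) := fun x => rfl
  have hrestr : ∀ x : A ⧸ N₀, x ∈ AddCommGroup.primaryComponent (A ⧸ N₀) p →
      φ x ∈ AddCommGroup.primaryComponent ((A ⧸ N₁) × (A ⧸ N₂)) p := by
    intro x hx
    obtain ⟨k, hk⟩ := (memP_aux p x).mp hx
    exact (memP_aux p (φ x)).mpr ⟨k, by rw [← map_nsmul, hk, map_zero]⟩
  set ψ : (AddCommGroup.primaryComponent (A ⧸ N₀) p) →+
      (AddCommGroup.primaryComponent ((A ⧸ N₁) × (A ⧸ N₂)) p) :=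
    (φ.comp (AddCommGroup.primaryComponent (A ⧸ N₀) p).subtype).codRestrict _
      (fun x => hrestr x x.2) with hψ
  have hmk_nsmul : ∀ (N : AddSubgroup A) (k : ℕ) (a : A),
      (p ^ k • (QuotientAddGroup.mk a : A ⧸ N)) = QuotientAddGroup.mk (p ^ k • a) :=
    fun N k a => (map_nsmul (QuotientAddGroup.mk' N) (p ^ k) a).symm
  -- injectivity
  have hinj : Function.Injective ψ := by
    rw [injective_iff_map_eq_zero]
    rintro ⟨x, hx⟩ h0
    obtain ⟨a, rfl⟩ := QuotientAddGroup.mk_surjective x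
    obtain ⟨k, hk⟩ := (memP_aux p _).mp hx
    have hk' : ((p : ℤ) ^ k) • a ∈ N₀ := by
      rw [← nsmul_zsmul_aux]
      refine (QuotientAddGroup.eq_zero_iff _).mp ?_
      rw [← hmk_nsmul]; exact hk
    have h0' : φ (QuotientAddGroup.mk a) = 0 := congrArg Subtype.val h0
    rw [hφmk, Prod.ext_iff] at h0'
    have ha1 : a ∈ N₁ := (QuotientAddGroup.eq_zero_iff _).mp h0'.1
    have ha2 : a ∈ N₂ := (QuotientAddGroup.eq_zero_iff _).mp h0'.2
    have hm : m • a ∈ N₀ := key1 a ha1 ha2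
    obtain ⟨u, v, huv⟩ := hcop k
    have haN : a ∈ N₀ := by
      have heq : a = u • (((p : ℤ) ^ k) • a) + v • (m • a) := by
        rw [← mul_smul, ← mul_smul, ← add_smul, huv, one_smul]
      rw [heq]
      exact N₀.add_mem (N₀.zsmul_mem hk' u) (N₀.zsmul_mem hm v)
    exact Subtype.ext ((QuotientAddGroup.eq_zero_iff _).mpr haN)
  -- surjectivity
  have hsurj : Function.Surjective ψ := by
    rintro ⟨⟨xq, yq⟩, hmem⟩
    obtain ⟨x, rfl⟩ := QuotientAddGroup.mk_surjective xq
    obtain ⟨y, rfl⟩ := QuotientAddGroup.mk_surjective yq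
    obtain ⟨k, hk⟩ := (memP_aux p _).mp hmem
    rw [Prod.smul_mk, Prod.mk_eq_zero] at hk
    have hzx : ((p : ℤ) ^ k) • x ∈ N₁ := by
      rw [← nsmul_zsmul_aux]
      refine (QuotientAddGroup.eq_zero_iff _).mp ?_
      rw [← hmk_nsmul]; exact hk.1
    have hzy : ((p : ℤ) ^ k) • y ∈ N₂ := by
      rw [← nsmul_zsmul_aux]
      refine (QuotientAddGroup.eq_zero_iff _).mp ?_
      rw [← hmk_nsmul]; exact hk.2
    obtain ⟨u, v, huv⟩ := hcop k
    have hsum : x - y ∈ N₁ ⊔ N₂ := by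
      have hms : m • (x - y) ∈ N₁ ⊔ N₂ := by
        have e : m • (x - y) = β (x - y) - α (x - y) :=
          (sub_eq_iff_eq_add'.mpr (hβfun _)).symm
        rw [e]
        exact sub_mem (AddSubgroup.mem_sup_right ⟨x - y, rfl⟩)
          (AddSubgroup.mem_sup_left ⟨x - y, rfl⟩)
      have hps : ((p : ℤ) ^ k) • (x - y) ∈ N₁ ⊔ N₂ := by
        rw [smul_sub]
        exact sub_mem (AddSubgroup.mem_sup_left hzx) (AddSubgroup.mem_sup_right hzy)
      have heq : x - y = u • (((p : ℤ) ^ k) • (x - y)) + v • (m • (x - y)) := by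
        rw [← mul_smul, ← mul_smul, ← add_smul, huv, one_smul]
      rw [heq]
      exact add_mem (AddSubgroup.zsmul_mem _ hps u) (AddSubgroup.zsmul_mem _ hms v)
    obtain ⟨a, ha, b, hb, hab⟩ := AddSubgroup.mem_sup.mp hsum
    set z := x - a with hz
    have hz1 : z - x ∈ N₁ := by
      rw [hz, sub_sub_cancel_left]; exact N₁.neg_mem ha
    have hz2 : z - y ∈ N₂ := by
      have e : z - y = b := by
        calc z - y = (x - y) - a := by rw [hz]; abel
          _ = (a + b) - a := by rw [hab]
          _ = b := by abel
      rw [e]; exact hb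
    have hzp1 : ((p : ℤ) ^ k) • z ∈ N₁ := by
      have e : ((p : ℤ) ^ k) • z = ((p : ℤ) ^ k) • x - ((p : ℤ) ^ k) • a := by
        rw [hz, smul_sub]
      rw [e]
      exact sub_mem hzx (N₁.zsmul_mem ha _)
    have hzp2 : ((p : ℤ) ^ k) • z ∈ N₂ := by
      have e : ((p : ℤ) ^ k) • z = ((p : ℤ) ^ k) • (z - y) + ((p : ℤ) ^ k) • y := by
        rw [← smul_add]; congr 1; abel
      rw [e]
      exact add_mem (N₂.zsmul_mem hz2 _) hzy
    have hzN0 : m • (((p : ℤ) ^ k) • z) ∈ N₀ := key1 _ hzp1 hzp2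
    set w := (v * m) • z with hw
    have hw1 : w - x ∈ N₁ := by
      have e : w - x = (-u) • (((p : ℤ) ^ k) • z) + (z - x) := by
        rw [hw, ← mul_smul]
        have e2 : -u * (p : ℤ) ^ k = v * m - 1 := by linarith [huv]
        rw [e2, sub_smul, one_smul]; abel
      rw [e]
      exact add_mem (N₁.zsmul_mem hzp1 _) hz1
    have hw2 : w - y ∈ N₂ := by
      have e : w - y = (-u) • (((p : ℤ) ^ k) • z) + (z - y) := by
        rw [hw, ← mul_smul]
        have e2 : -u * (p : ℤ) ^ k = v * m - 1 := by linarith [huv]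
        rw [e2, sub_smul, one_smul]; abel
      rw [e]
      exact add_mem (N₂.zsmul_mem hzp2 _) hz2
    have hwP : (QuotientAddGroup.mk w : A ⧸ N₀) ∈
        AddCommGroup.primaryComponent (A ⧸ N₀) p := by
      refine (memP_aux p _).mpr ⟨k, ?_⟩
      rw [hmk_nsmul]
      refine (QuotientAddGroup.eq_zero_iff _).mpr ?_
      rw [nsmul_zsmul_aux, hw, ← mul_smul]
      have h := N₀.zsmul_mem hzN0 v
      rw [← mul_smul, ← mul_smul] at h
      have e : (p : ℤ) ^ k * (v * m) = v * m * (p : ℤ) ^ k := by ring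
      rw [e]; exact h
    refine ⟨⟨QuotientAddGroup.mk w, hwP⟩, ?_⟩
    apply Subtype.ext
    show φ (QuotientAddGroup.mk w) = (QuotientAddGroup.mk x, QuotientAddGroup.mk y)
    rw [hφmk, Prod.mk.injEq]
    constructor
    · rw [QuotientAddGroup.eq]
      have e : -w + x = -(w - x) := by abel
      rw [e]; exact N₁.neg_mem hw1
    · rw [QuotientAddGroup.eq]
      have e : -w + y = -(w - y) := by abel
      rw [e]; exact N₂.neg_mem hw2
  exact ⟨AddEquiv.ofBijective ψ ⟨hinj, hsurj⟩⟩
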